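/- Let w ∈ W and let Π′ ⊆ Π be a subset of the simple roots. If (e_w, α∨) ≥ 0 for every α ∈ Π′, then w is the minimal-length representative of its coset wW_{Π′}, i.e. ℓ(w s_α) > ℓ(w) for every α ∈ Π′ (where W_{Π′} is the subgroup of W generated by {s_α : α ∈ Π′}). -/

import Mathlib

open scoped InnerProductSpace Classical

noncomputable section

/-- A reduced crystallographic root system `Φ` spanning a finite-dimensional real inner
product space `V`, together with a choice of simple roots `π` (determining the positive
system), the corresponding fundamental weights `ω`, the reflections `s`, the Weyl group
`W` and the weight lattice `X`. -/
structure RootSystemData (V : Type) [NormedAddCommGroup V] [InnerProductSpace ℝ V]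
    [FiniteDimensional ℝ V] where
  /-- the (finite) set of roots -/
  Φ : Finset V
  /-- the rank -/
  r : ℕ
  /-- the simple roots `α₁, …, α_r` -/
  π : Fin r → V
  /-- the fundamental weights `ω₁, …, ω_r` -/
  ω : Fin r → V
  /-- the orthogonal reflection attached to a root -/
  s : V → (V ≃ₗ[ℝ] V)
  /-- the Weyl group -/
  W : Subgroup (V ≃ₗ[ℝ] V)
  /-- the weight lattice -/
  X : AddSubgroup V
  root_ne_zero : ∀ α ∈ Φ, α ≠ (0 : V)
  root_span : Submodule.span ℝ (Φ : Set V) = ⊤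
  reduced : ∀ α ∈ Φ, ∀ c : ℝ, c • α ∈ Φ → c = 1 ∨ c = -1
  crystallographic : ∀ α ∈ Φ, ∀ β ∈ Φ, ∃ n : ℤ, 2 * ⟪β, α⟫_ℝ / ⟪α, α⟫_ℝ = (n : ℝ)
  s_apply : ∀ α ∈ Φ, ∀ v : V, s α v = v - (2 * ⟪v, α⟫_ℝ / ⟪α, α⟫_ℝ) • α
  refl_stable : ∀ α ∈ Φ, ∀ β ∈ Φ, s α β ∈ Φ
  W_eq : W = Subgroup.closure {g : V ≃ₗ[ℝ] V | ∃ α ∈ Φ, g = s α}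
  inner_invariant : ∀ g ∈ W, ∀ u v : V, ⟪g u, g v⟫_ℝ = ⟪u, v⟫_ℝ
  simple_mem : ∀ i, π i ∈ Φ
  simple_indep : LinearIndependent ℝ π
  pos_or_neg : ∀ α ∈ Φ,
      (∃ c : Fin r → ℝ, (∀ i, 0 ≤ c i) ∧ α = ∑ i, c i • π i) ∨
      (∃ c : Fin r → ℝ, (∀ i, 0 ≤ c i) ∧ -α = ∑ i, c i • π i)
  fund : ∀ i j, 2 * ⟪ω i, π j⟫_ℝ / ⟪π j, π j⟫_ℝ = if i = j then (1 : ℝ) else 0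
  X_eq : X = AddSubgroup.closure (Set.range ω)
  X_stable : ∀ g ∈ W, ∀ x ∈ X, g x ∈ X

/-- The pairing `(v, α∨) = 2(v,α)/(α,α)` of a vector with the coroot of `α`. -/
def pairing {V : Type} [NormedAddCommGroup V] [InnerProductSpace ℝ V]
    (v α : V) : ℝ := 2 * ⟪v, α⟫_ℝ / ⟪α, α⟫_ℝ

namespace RootSystemData

variable {V : Type} [NormedAddCommGroup V] [InnerProductSpace ℝ V] [FiniteDimensional ℝ V]
variable (C : RootSystemData V)

/-- `α` is a nonnegative combination of the simple roots (a positive root, if `α ∈ Φ`). -/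
def IsPos (α : V) : Prop := ∃ c : Fin C.r → ℝ, (∀ i, 0 ≤ c i) ∧ α = ∑ i, c i • C.π i

/-- `α` is a nonpositive combination of the simple roots (a negative root, if `α ∈ Φ`). -/
def IsNeg (α : V) : Prop := C.IsPos (-α)

/-- A weight is dominant if it pairs nonnegatively with all simple coroots. -/
def IsDominant (lam : V) : Prop := ∀ i, 0 ≤ pairing lam (C.π i)

/-- The product of the simple reflections along a word. -/
def wordProd (l : List (Fin C.r)) : V ≃ₗ[ℝ] V := (l.map fun i => C.s (C.π i)).prod

/-- The length of `w`: the least length of an expression of `w` as a product of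
simple reflections. -/
def length (w : V ≃ₗ[ℝ] V) : ℕ :=
  sInf {n | ∃ l : List (Fin C.r), l.length = n ∧ C.wordProd l = w}

/-- The (strong) Bruhat order on the Weyl group: `u ≤ v` iff `v` is obtained from `u`
by successively multiplying by reflections, increasing the length at each step. -/
def BruhatLE (u v : V ≃ₗ[ℝ] V) : Prop :=
  Relation.ReflTransGen
    (fun a b => (∃ α ∈ C.Φ, b = a * C.s α) ∧ C.length a < C.length b) u v

/-- The Steinberg weight `e_v = v⁻¹ ⬝ ∑_{i : v⁻¹ α_i < 0} ω_i`. -/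
def steinberg (v : V ≃ₗ[ℝ] V) : V :=
  v⁻¹ (∑ i ∈ Finset.univ.filter (fun i => C.IsNeg (v⁻¹ (C.π i))), C.ω i)

/-- The excellent order on weights: `λ ≤ₑ μ` iff `(λ,λ) < (μ,μ)`, or `λ = wν`, `μ = zν`
for some dominant `ν ∈ X` and `w ≤ z` in the Bruhat order. -/
def ExcLE (lam mu : V) : Prop :=
  ⟪lam, lam⟫_ℝ < ⟪mu, mu⟫_ℝ ∨
    ∃ nu ∈ C.X, C.IsDominant nu ∧
      ∃ w ∈ C.W, ∃ z ∈ C.W, C.BruhatLE w z ∧ lam = w nu ∧ mu = z nu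

/-- The strict excellent order. -/
def ExcLT (lam mu : V) : Prop := C.ExcLE lam mu ∧ lam ≠ mu

/-- The antipodal excellent order: `λ ≤ₐ μ` iff `-λ ≤ₑ -μ`. -/
def AntiLE (lam mu : V) : Prop := C.ExcLE (-lam) (-mu)

/-- The strict antipodal excellent order. -/
def AntiLT (lam mu : V) : Prop := C.AntiLE lam mu ∧ lam ≠ mu

/-- The dominance order: `μ ≤_d ν` iff `ν - μ` is a nonnegative integer combination of
the positive roots. -/
def DomLE (mu nu : V) : Prop :=
  ∃ c : V → ℕ, nu - mu = ∑ α ∈ C.Φ.filter (fun a => C.IsPos a), (c α : ℝ) • α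

theorem omega_mem (i : Fin C.r) : C.ω i ∈ C.X := by
  rw [C.X_eq]; exact AddSubgroup.subset_closure ⟨i, rfl⟩

theorem steinberg_mem {v : V ≃ₗ[ℝ] V} (hv : v ∈ C.W) : C.steinberg v ∈ C.X :=
  C.X_stable _ (inv_mem hv) _ (AddSubgroup.sum_mem _ fun i _ => C.omega_mem i)

/-- The group ring `ℤ[X]` of the weight lattice. -/
abbrev GroupRing := AddMonoidAlgebra ℤ ↥C.X

/-- The basis element `e^λ` of `ℤ[X]`. -/
def expo (x : V) (hx : x ∈ C.X) : C.GroupRing := AddMonoidAlgebra.single ⟨x, hx⟩ 1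

/-- `e^λ`, defined for all `λ : V` (and zero off the lattice). -/
def expoOf (x : V) : C.GroupRing := if hx : x ∈ C.X then C.expo x hx else 0

/-- The coefficient of `e^x` in an element of `ℤ[X]`. -/
def coeff (m : C.GroupRing) (x : ↥C.X) : ℤ := (AddMonoidAlgebra.coeff m : ↥C.X →₀ ℤ) x

/-- The support of an element of `ℤ[X]`. -/
def supp (m : C.GroupRing) : Finset ↥C.X := (AddMonoidAlgebra.coeff m : ↥C.X →₀ ℤ).support

/-- The action of `g ∈ W` on the weight lattice. -/
def actX (g : V ≃ₗ[ℝ] V) (hg : g ∈ C.W) : ↥C.X → ↥C.X :=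
  fun x => ⟨g x, C.X_stable g hg x.1 x.2⟩

/-- The action of `g ∈ W` on `ℤ[X]`, with `e^λ ↦ e^{gλ}`. -/
def wAct (g : V ≃ₗ[ℝ] V) (hg : g ∈ C.W) (m : C.GroupRing) : C.GroupRing :=
  AddMonoidAlgebra.ofCoeff (Finsupp.mapDomain (C.actX g hg) (AddMonoidAlgebra.coeff m))

/-- `m` lies in the invariant subring `ℤ[X]^W`. -/
def IsWInvariant (m : C.GroupRing) : Prop := ∀ g (hg : g ∈ C.W), C.wAct g hg m = m

/-- The parabolic subgroup `W_{Π'}` generated by the simple reflections `s_α, α ∈ Π'`,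
for a subset `Π'` of the simple roots (given by a subset `J` of the index set). -/
def parabolicSubgroup (J : Set (Fin C.r)) : Subgroup (V ≃ₗ[ℝ] V) :=
  Subgroup.closure {g | ∃ i ∈ J, g = C.s (C.π i)}

theorem parabolic_le (J : Set (Fin C.r)) : C.parabolicSubgroup J ≤ C.W := by
  refine (Subgroup.closure_le _).2 ?_
  rintro g ⟨i, _, rfl⟩
  rw [C.W_eq]
  exact Subgroup.subset_closure ⟨C.π i, C.simple_mem i, rfl⟩

/-- `m` lies in the invariant subring `ℤ[X]^H` for a subgroup `H ≤ W`. -/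
def IsInvariantUnder (H : Subgroup (V ≃ₗ[ℝ] V)) (hH : H ≤ C.W) (m : C.GroupRing) : Prop :=
  ∀ g (hg : g ∈ H), C.wAct g (hH hg) m = m

/-- `v` is of minimal length in its coset `v ⬝ W_{Π'}`. -/
def IsMinCosetRep (J : Set (Fin C.r)) (v : V ≃ₗ[ℝ] V) : Prop :=
  v ∈ C.W ∧ ∀ z ∈ C.parabolicSubgroup J, C.length v ≤ C.length (v * z)

/-- The subgroup generated by the simple reflections fixing a given vector. -/
def fixSubgroup (x : V) : Subgroup (V ≃ₗ[ℝ] V) :=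
  Subgroup.closure {g | ∃ i : Fin C.r, C.s (C.π i) x = x ∧ g = C.s (C.π i)}

end RootSystemData


open scoped InnerProductSpace Classical
set_option linter.unusedSectionVars false

noncomputable section

namespace RootSystemData

variable {V : Type} [NormedAddCommGroup V] [InnerProductSpace ℝ V] [FiniteDimensional ℝ V]

theorem apply_inv_apply (g : V ≃ₗ[ℝ] V) (v : V) : g (g⁻¹ v) = v := g.apply_symm_apply v

theorem inv_apply_apply (g : V ≃ₗ[ℝ] V) (v : V) : g⁻¹ (g v) = v := g.symm_apply_apply v

theorem mul_apply (g h : V ≃ₗ[ℝ] V) (v : V) : (g * h) v = g (h v) := rfl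

variable (C : RootSystemData V)

theorem inner_root_pos {α : V} (hα : α ∈ C.Φ) : 0 < ⟪α, α⟫_ℝ := by
  rw [real_inner_self_eq_norm_sq]
  have : 0 < ‖α‖ := norm_pos_iff.2 (C.root_ne_zero α hα)
  positivity

theorem s_apply_self {α : V} (hα : α ∈ C.Φ) : C.s α α = -α := by
  rw [C.s_apply α hα α]
  rw [mul_div_assoc, div_self (ne_of_gt (C.inner_root_pos hα)), mul_one]
  module

theorem neg_root_mem {α : V} (hα : α ∈ C.Φ) : -α ∈ C.Φ := by
  have := C.refl_stable α hα α hα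
  rwa [C.s_apply_self hα] at this

theorem s_neg_eq {α : V} (hα : α ∈ C.Φ) : C.s (-α) = C.s α := by
  apply LinearEquiv.toLinearMap_injective
  apply LinearMap.ext
  intro v
  show C.s (-α) v = C.s α v
  rw [C.s_apply α hα v, C.s_apply (-α) (C.neg_root_mem hα) v]
  rw [inner_neg_neg, inner_neg_right]
  rw [show (2 * -⟪v, α⟫_ℝ / ⟪α, α⟫_ℝ) = -(2 * ⟪v, α⟫_ℝ / ⟪α, α⟫_ℝ) by ring]
  module

theorem s_mul_self {α : V} (hα : α ∈ C.Φ) : C.s α * C.s α = 1 := by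
  apply LinearEquiv.toLinearMap_injective
  apply LinearMap.ext
  intro v
  show C.s α (C.s α v) = v
  have hne := ne_of_gt (C.inner_root_pos hα)
  rw [C.s_apply α hα v, C.s_apply α hα]
  rw [inner_sub_left, real_inner_smul_left]
  field_simp
  module

theorem s_inv {α : V} (hα : α ∈ C.Φ) : (C.s α)⁻¹ = C.s α :=
  inv_eq_of_mul_eq_one_left (C.s_mul_self hα)

theorem s_mem_W {α : V} (hα : α ∈ C.Φ) : C.s α ∈ C.W := by
  rw [C.W_eq]; exact Subgroup.subset_closure ⟨α, hα, rfl⟩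

end RootSystemData

/-- subgroup stabilizing a finset -/
def stabFinset {V : Type} [NormedAddCommGroup V] [InnerProductSpace ℝ V]
    [FiniteDimensional ℝ V] (F : Finset V) : Subgroup (V ≃ₗ[ℝ] V) where
  carrier := {g | Finset.image (fun v => g v) F = F}
  one_mem' := by simp
  mul_mem' := by
    intro a b ha hb
    show Finset.image (fun v => (a * b) v) F = F
    have : (fun v => (a * b) v) = (fun v => a v) ∘ (fun v => b v) := rfl
    rw [this, ← Finset.image_image]
    simp only [Set.mem_setOf_eq] at ha hb
    rw [hb, ha]
  inv_mem' := by
    intro a ha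
    simp only [Set.mem_setOf_eq] at ha ⊢
    conv_lhs => rw [← ha]
    rw [Finset.image_image]
    have : ((fun v => a⁻¹ v) ∘ fun v => a v) = id := by
      funext v; exact a.symm_apply_apply v
    rw [this, Finset.image_id]

theorem mem_stabFinset_iff {V : Type} [NormedAddCommGroup V] [InnerProductSpace ℝ V]
    [FiniteDimensional ℝ V] {F : Finset V} {g : V ≃ₗ[ℝ] V} :
    g ∈ stabFinset F ↔ Finset.image (fun v => g v) F = F := Iff.rfl

theorem image_subset_mem_stabFinset {V : Type} [NormedAddCommGroup V] [InnerProductSpace ℝ V]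
    [FiniteDimensional ℝ V] {F : Finset V} {g : V ≃ₗ[ℝ] V}
    (h : ∀ v ∈ F, g v ∈ F) : g ∈ stabFinset F := by
  rw [mem_stabFinset_iff]
  apply Finset.eq_of_subset_of_card_le
  · intro x hx
    rcases Finset.mem_image.1 hx with ⟨v, hv, rfl⟩
    exact h v hv
  · rw [Finset.card_image_of_injective _ g.injective]

theorem mem_of_mem_stabFinset {V : Type} [NormedAddCommGroup V] [InnerProductSpace ℝ V]
    [FiniteDimensional ℝ V] {F : Finset V} {g : V ≃ₗ[ℝ] V}
    (h : g ∈ stabFinset F) {v : V} (hv : v ∈ F) : g v ∈ F := by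
  rw [mem_stabFinset_iff] at h
  rw [← h]
  exact Finset.mem_image_of_mem _ hv

namespace RootSystemData

variable {V : Type} [NormedAddCommGroup V] [InnerProductSpace ℝ V] [FiniteDimensional ℝ V]
variable (C : RootSystemData V)

theorem W_le_stabFinset : C.W ≤ stabFinset C.Φ := by
  rw [C.W_eq]
  refine (Subgroup.closure_le _).2 ?_
  rintro g ⟨α, hα, rfl⟩
  exact image_subset_mem_stabFinset (fun β hβ => C.refl_stable α hα β hβ)

theorem root_apply_mem {g : V ≃ₗ[ℝ] V} (hg : g ∈ C.W) {β : V} (hβ : β ∈ C.Φ) :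
    g β ∈ C.Φ := mem_of_mem_stabFinset (C.W_le_stabFinset hg) hβ

theorem inner_invariant' {g : V ≃ₗ[ℝ] V} (hg : g ∈ C.W) (u v : V) :
    ⟪g⁻¹ u, v⟫_ℝ = ⟪u, g v⟫_ℝ := by
  have := C.inner_invariant g hg (g⁻¹ u) v
  rw [apply_inv_apply] at this
  exact this.symm

/-- conjugation formula -/
theorem s_conj {g : V ≃ₗ[ℝ] V} (hg : g ∈ C.W) {α : V} (hα : α ∈ C.Φ) :
    C.s (g α) = g * C.s α * g⁻¹ := by
  apply LinearEquiv.toLinearMap_injective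
  apply LinearMap.ext
  intro v
  show C.s (g α) v = g (C.s α (g⁻¹ v))
  rw [C.s_apply (g α) (C.root_apply_mem hg hα) v, C.s_apply α hα (g⁻¹ v)]
  rw [map_sub, map_smul, apply_inv_apply]
  rw [C.inner_invariant' hg v α]
  rw [show ⟪α, α⟫_ℝ = ⟪g α, g α⟫_ℝ from (C.inner_invariant g hg α α).symm]

end RootSystemData
namespace RootSystemData

variable {V : Type} [NormedAddCommGroup V] [InnerProductSpace ℝ V] [FiniteDimensional ℝ V]
variable (C : RootSystemData V)

theorem isPos_simple (i : Fin C.r) : C.IsPos (C.π i) := by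
  refine ⟨fun k => if k = i then 1 else 0, fun k => by positivity, ?_⟩
  simp [ite_smul]

theorem isPos_zero : C.IsPos 0 :=
  ⟨fun _ => 0, fun _ => le_refl _, by simp⟩

theorem isPos_add {β γ : V} (hβ : C.IsPos β) (hγ : C.IsPos γ) : C.IsPos (β + γ) := by
  obtain ⟨c, hc, rfl⟩ := hβ
  obtain ⟨d, hd, rfl⟩ := hγ
  exact ⟨fun k => c k + d k, fun k => add_nonneg (hc k) (hd k), by
    rw [← Finset.sum_add_distrib]; congr 1; funext k; rw [add_smul]⟩

theorem isPos_smul {t : ℝ} (ht : 0 ≤ t) {β : V} (hβ : C.IsPos β) : C.IsPos (t • β) := by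
  obtain ⟨c, hc, rfl⟩ := hβ
  exact ⟨fun k => t * c k, fun k => mul_nonneg ht (hc k), by
    rw [Finset.smul_sum]; congr 1; funext k; rw [mul_smul]⟩

theorem isPos_sum {ι : Type*} (F : Finset ι) (f : ι → V) (h : ∀ k ∈ F, C.IsPos (f k)) :
    C.IsPos (∑ k ∈ F, f k) := by
  classical
  induction F using Finset.induction_on with
  | empty => simpa using C.isPos_zero
  | insert _ _ hx ih =>
    rw [Finset.sum_insert hx]
    exact C.isPos_add (h _ (Finset.mem_insert_self _ _))
      (ih fun k hk => h k (Finset.mem_insert_of_mem hk))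

theorem not_isPos_isNeg {β : V} (hβ : β ≠ 0) (h1 : C.IsPos β) (h2 : C.IsNeg β) : False := by
  obtain ⟨c, hc, hcs⟩ := h1
  obtain ⟨d, hd, hds⟩ := h2
  have hsum : ∑ i, (c i + d i) • C.π i = 0 := by
    simp only [add_smul, Finset.sum_add_distrib]
    rw [← hcs, ← hds]; abel
  have hzero := (Fintype.linearIndependent_iff.1 C.simple_indep) _ hsum
  apply hβ
  rw [hcs]
  have : ∀ i, c i = 0 := fun i => by
    have := hzero i
    have h1 := hc i; have h2 := hd i
    linarith
  simp [this]

theorem isPos_or_isNeg {β : V} (hβ : β ∈ C.Φ) : C.IsPos β ∨ C.IsNeg β := C.pos_or_neg β hβ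

theorem isNeg_of_not_isPos {β : V} (hβ : β ∈ C.Φ) (h : ¬ C.IsPos β) : C.IsNeg β :=
  (C.isPos_or_isNeg hβ).resolve_left h

theorem isPos_of_not_isNeg {β : V} (hβ : β ∈ C.Φ) (h : ¬ C.IsNeg β) : C.IsPos β :=
  (C.isPos_or_isNeg hβ).resolve_right h

theorem isNeg_neg {β : V} (h : C.IsPos β) : C.IsNeg (-β) := by
  unfold IsNeg; rwa [neg_neg]

/-- Lemma A: a simple reflection sends positive roots other than its own simple root
to positive roots. -/
theorem isPos_s_apply {i : Fin C.r} {β : V} (hβ : β ∈ C.Φ) (hpos : C.IsPos β)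
    (hne : β ≠ C.π i) : C.IsPos (C.s (C.π i) β) := by
  obtain ⟨c, hc, hcs⟩ := hpos
  -- there is k ≠ i with c k ≠ 0
  have hk : ∃ k, k ≠ i ∧ c k ≠ 0 := by
    by_contra hcon
    push_neg at hcon
    have : β = c i • C.π i := by
      rw [hcs]
      rw [Finset.sum_eq_single i]
      · intro k _ hki; rw [hcon k hki, zero_smul]
      · intro h; exact absurd (Finset.mem_univ i) h
    have := C.reduced (C.π i) (C.simple_mem i) (c i) (this ▸ hβ)
    rcases this with h1 | h1
    · apply hne; rw [‹β = c i • C.π i›, h1, one_smul]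
    · have := hc i; rw [h1] at this; linarith
  obtain ⟨k, hki, hck⟩ := hk
  have hsβ : C.s (C.π i) β ∈ C.Φ := C.refl_stable _ (C.simple_mem i) _ hβ
  by_contra hcon
  have hneg := C.isNeg_of_not_isPos hsβ hcon
  obtain ⟨d, hd, hds⟩ := hneg
  have hform : C.s (C.π i) β = β - (2 * ⟪β, C.π i⟫_ℝ / ⟪C.π i, C.π i⟫_ℝ) • C.π i :=
    C.s_apply _ (C.simple_mem i) β
  set p := 2 * ⟪β, C.π i⟫_ℝ / ⟪C.π i, C.π i⟫_ℝ with hp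
  -- sum identity
  have hsum : ∑ m, (c m + d m - (if m = i then p else 0)) • C.π m = 0 := by
    have h0 : β - p • C.π i + (- C.s (C.π i) β) = 0 := by rw [← hform]; abel
    rw [hds] at h0
    rw [hcs] at h0
    simp only [sub_smul, add_smul, Finset.sum_sub_distrib, Finset.sum_add_distrib, ite_smul,
      zero_smul, Finset.sum_ite_eq']
    simp only [Finset.mem_univ, if_true]
    rw [← h0]
    abel
  have hzero := (Fintype.linearIndependent_iff.1 C.simple_indep) _ hsum
  have := hzero k
  rw [if_neg hki] at this
  have h1 := hc k; have h2 := hd k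
  apply hck
  linarith

end RootSystemData
namespace RootSystemData

variable {V : Type} [NormedAddCommGroup V] [InnerProductSpace ℝ V] [FiniteDimensional ℝ V]
variable (C : RootSystemData V)

/-- the subgroup generated by all simple reflections -/
def Wsimple : Subgroup (V ≃ₗ[ℝ] V) := Subgroup.closure {g | ∃ i : Fin C.r, g = C.s (C.π i)}

theorem Wsimple_le_W : C.Wsimple ≤ C.W := by
  refine (Subgroup.closure_le _).2 ?_
  rintro g ⟨i, rfl⟩
  exact C.s_mem_W (C.simple_mem i)

theorem wordProd_nil : C.wordProd [] = 1 := rfl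

theorem wordProd_cons (i : Fin C.r) (t : List (Fin C.r)) :
    C.wordProd (i :: t) = C.s (C.π i) * C.wordProd t := by
  unfold wordProd
  rw [List.map_cons, List.prod_cons]

theorem wordProd_append (l t : List (Fin C.r)) :
    C.wordProd (l ++ t) = C.wordProd l * C.wordProd t := by
  unfold wordProd
  rw [List.map_append, List.prod_append]

theorem wordProd_singleton (i : Fin C.r) : C.wordProd [i] = C.s (C.π i) := by
  rw [show [i] = i :: [] from rfl, C.wordProd_cons, C.wordProd_nil, mul_one]

theorem wordProd_mem_Wsimple (l : List (Fin C.r)) : C.wordProd l ∈ C.Wsimple := by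
  apply Subgroup.list_prod_mem
  intro x hx
  rcases List.mem_map.1 hx with ⟨i, _, rfl⟩
  exact Subgroup.subset_closure ⟨i, rfl⟩

theorem wordProd_mem_W (l : List (Fin C.r)) : C.wordProd l ∈ C.W :=
  C.Wsimple_le_W (C.wordProd_mem_Wsimple l)

theorem wordProd_reverse (l : List (Fin C.r)) :
    C.wordProd l.reverse = (C.wordProd l)⁻¹ := by
  induction l with
  | nil => simp [wordProd_nil]
  | cons i t ih =>
    rw [List.reverse_cons, C.wordProd_append, C.wordProd_singleton, ih, C.wordProd_cons,
      mul_inv_rev, C.s_inv (C.simple_mem i)]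

/-- the height functional: a linear map `φ` with `φ (π i) = 1` for all `i` -/
def heightφ : V →ₗ[ℝ] ℝ :=
  (Finsupp.linearCombination ℝ (fun _ : Fin C.r => (1 : ℝ))).comp
    (((Module.Basis.span C.simple_indep).repr :
        (Submodule.span ℝ (Set.range C.π)) ≃ₗ[ℝ] (Fin C.r →₀ ℝ)).toLinearMap.comp
      (Submodule.orthogonalProjectionOnto (Submodule.span ℝ (Set.range C.π))).toLinearMap)

theorem heightφ_simple (i : Fin C.r) : C.heightφ (C.π i) = 1 := by
  unfold heightφ
  have hmem : C.π i ∈ Submodule.span ℝ (Set.range C.π) :=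
    Submodule.subset_span ⟨i, rfl⟩
  simp only [LinearMap.comp_apply, ContinuousLinearMap.coe_coe, LinearEquiv.coe_coe]
  have h1 : Submodule.orthogonalProjectionOnto (Submodule.span ℝ (Set.range C.π)) (C.π i)
      = ⟨C.π i, hmem⟩ :=
    Submodule.orthogonalProjectionOnto_mem_subspace_eq_self (⟨C.π i, hmem⟩ : Submodule.span ℝ (Set.range C.π))
  rw [h1]
  have h2 : (⟨C.π i, hmem⟩ : Submodule.span ℝ (Set.range C.π)) = Module.Basis.span C.simple_indep i :=
    (Module.Basis.span_apply C.simple_indep i).symm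
  rw [h2, Module.Basis.repr_self, Finsupp.linearCombination_single, smul_eq_mul, mul_one]

theorem heightφ_sum (c : Fin C.r → ℝ) : C.heightφ (∑ i, c i • C.π i) = ∑ i, c i := by
  rw [map_sum]
  congr 1
  funext i
  rw [map_smul, C.heightφ_simple, smul_eq_mul, mul_one]

end RootSystemData
namespace RootSystemData

variable {V : Type} [NormedAddCommGroup V] [InnerProductSpace ℝ V] [FiniteDimensional ℝ V]
variable (C : RootSystemData V)

theorem s_simple_mem_Wsimple (i : Fin C.r) : C.s (C.π i) ∈ C.Wsimple :=
  Subgroup.subset_closure ⟨i, rfl⟩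

theorem s_mem_Wsimple_aux : ∀ (N : ℕ) (β : V), β ∈ C.Φ → C.IsPos β →
    (C.Φ.filter (fun γ => C.IsPos γ ∧ C.heightφ γ < C.heightφ β)).card = N →
    C.s β ∈ C.Wsimple := by
  intro N
  induction N using Nat.strong_induction_on with
  | _ N ih =>
    intro β hβ hpos hcard
    by_cases hsimp : ∃ i, β = C.π i
    · obtain ⟨i, rfl⟩ := hsimp
      exact C.s_simple_mem_Wsimple i
    push_neg at hsimp
    obtain ⟨c, hc, hcs⟩ := hpos
    have hpos : C.IsPos β := ⟨c, hc, hcs⟩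
    have hββ : 0 < ⟪β, β⟫_ℝ := C.inner_root_pos hβ
    have hex : ∃ i, 0 < c i * ⟪β, C.π i⟫_ℝ := by
      by_contra hcon
      push_neg at hcon
      have hin : ⟪β, ∑ i, c i • C.π i⟫_ℝ = ∑ i, c i * ⟪β, C.π i⟫_ℝ := by
        rw [inner_sum]
        congr 1; funext i; rw [real_inner_smul_right]
      have h0 : 0 < ⟪β, ∑ i, c i • C.π i⟫_ℝ := by rw [← hcs]; exact hββ
      rw [hin] at h0
      have : ∑ i, c i * ⟪β, C.π i⟫_ℝ ≤ 0 := Finset.sum_nonpos (fun i _ => hcon i)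
      linarith
    obtain ⟨i, hi⟩ := hex
    have hip : 0 < ⟪β, C.π i⟫_ℝ := by
      rcases lt_or_ge 0 ⟪β, C.π i⟫_ℝ with h | h
      · exact h
      · exfalso; have := mul_nonpos_of_nonneg_of_nonpos (hc i) h; linarith
    set p := 2 * ⟪β, C.π i⟫_ℝ / ⟪C.π i, C.π i⟫_ℝ with hp
    have hppos : 0 < p := div_pos (by linarith) (C.inner_root_pos (C.simple_mem i))
    set γ := C.s (C.π i) β with hγ
    have hγΦ : γ ∈ C.Φ := C.refl_stable _ (C.simple_mem i) _ hβ
    have hγpos : C.IsPos γ := C.isPos_s_apply hβ hpos (hsimp i)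
    have hform : γ = β - p • C.π i := C.s_apply _ (C.simple_mem i) β
    have hφ : C.heightφ γ = C.heightφ β - p := by
      rw [hform, map_sub, map_smul, C.heightφ_simple, smul_eq_mul, mul_one]
    have hlt : C.heightφ γ < C.heightφ β := by rw [hφ]; linarith
    -- measure decreases
    set Fβ := C.Φ.filter (fun δ => C.IsPos δ ∧ C.heightφ δ < C.heightφ β) with hFβ
    set Fγ := C.Φ.filter (fun δ => C.IsPos δ ∧ C.heightφ δ < C.heightφ γ) with hFγ
    have hss : Fγ ⊂ Fβ := by
      constructor
      · intro δ hδ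
        rw [Finset.mem_filter] at hδ ⊢
        exact ⟨hδ.1, hδ.2.1, lt_trans hδ.2.2 hlt⟩
      · intro hsub
        have : γ ∈ Fγ := hsub (Finset.mem_filter.2 ⟨hγΦ, hγpos, hlt⟩)
        rw [Finset.mem_filter] at this
        exact lt_irrefl _ this.2.2
    have hcardlt : Fγ.card < N := hcard ▸ Finset.card_lt_card hss
    have hsγ : C.s γ ∈ C.Wsimple := ih Fγ.card hcardlt γ hγΦ hγpos rfl
    -- β = s_i γ
    have hβγ : β = C.s (C.π i) γ := by
      rw [hγ, ← mul_apply, C.s_mul_self (C.simple_mem i)]; rfl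
    have hconj : C.s β = C.s (C.π i) * C.s γ * (C.s (C.π i))⁻¹ := by
      conv_lhs => rw [hβγ]
      exact C.s_conj (C.s_mem_W (C.simple_mem i)) hγΦ
    rw [hconj]
    exact mul_mem (mul_mem (C.s_simple_mem_Wsimple i) hsγ)
      (inv_mem (C.s_simple_mem_Wsimple i))

theorem s_mem_Wsimple {β : V} (hβ : β ∈ C.Φ) : C.s β ∈ C.Wsimple := by
  rcases C.isPos_or_isNeg hβ with h | h
  · exact C.s_mem_Wsimple_aux _ β hβ h rfl
  · have : C.s β = C.s (-(-β)) := by rw [neg_neg]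
    rw [this, C.s_neg_eq (C.neg_root_mem hβ)]
    exact C.s_mem_Wsimple_aux _ (-β) (C.neg_root_mem hβ) h rfl

theorem W_eq_Wsimple : C.W = C.Wsimple := by
  apply le_antisymm _ C.Wsimple_le_W
  rw [C.W_eq]
  refine (Subgroup.closure_le _).2 ?_
  rintro g ⟨α, hα, rfl⟩
  exact C.s_mem_Wsimple hα

theorem exists_word {w : V ≃ₗ[ℝ] V} (hw : w ∈ C.W) : ∃ l, C.wordProd l = w := by
  rw [C.W_eq_Wsimple] at hw
  induction hw using Subgroup.closure_induction with
  | mem g hg => obtain ⟨i, rfl⟩ := hg; exact ⟨[i], C.wordProd_singleton i⟩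
  | one => exact ⟨[], rfl⟩
  | mul a b _ _ iha ihb =>
    obtain ⟨la, rfl⟩ := iha; obtain ⟨lb, rfl⟩ := ihb
    exact ⟨la ++ lb, C.wordProd_append la lb⟩
  | inv a _ iha =>
    obtain ⟨la, rfl⟩ := iha
    exact ⟨la.reverse, C.wordProd_reverse la⟩

theorem length_le {l : List (Fin C.r)} {w : V ≃ₗ[ℝ] V} (h : C.wordProd l = w) :
    C.length w ≤ l.length := Nat.sInf_le ⟨l, rfl, h⟩

theorem exists_min_word {w : V ≃ₗ[ℝ] V} (hw : w ∈ C.W) :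
    ∃ l, l.length = C.length w ∧ C.wordProd l = w := by
  obtain ⟨l, hl⟩ := C.exists_word hw
  have : C.length w ∈ {n | ∃ l : List (Fin C.r), l.length = n ∧ C.wordProd l = w} :=
    Nat.sInf_mem ⟨l.length, l, rfl, hl⟩
  exact this

theorem length_mul_s_le {w : V ≃ₗ[ℝ] V} (hw : w ∈ C.W) (i : Fin C.r) :
    C.length (w * C.s (C.π i)) ≤ C.length w + 1 := by
  obtain ⟨l, hlen, hl⟩ := C.exists_min_word hw
  have : C.wordProd (l ++ [i]) = w * C.s (C.π i) := by
    rw [C.wordProd_append, hl, C.wordProd_singleton]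
  have h2 := C.length_le this
  rw [List.length_append, hlen] at h2
  exact h2

end RootSystemData
namespace RootSystemData

variable {V : Type} [NormedAddCommGroup V] [InnerProductSpace ℝ V] [FiniteDimensional ℝ V]
variable (C : RootSystemData V)

theorem not_isPos_isNeg_root {β : V} (hβ : β ∈ C.Φ) (h1 : C.IsPos β) (h2 : C.IsNeg β) :
    False := C.not_isPos_isNeg (C.root_ne_zero β hβ) h1 h2

/-- Lemma D (strong exchange along a word). -/
theorem word_descent : ∀ (l : List (Fin C.r)) (j : Fin C.r),
    C.IsNeg (C.wordProd l (C.π j)) →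
    ∃ l', l'.length + 1 = l.length ∧ C.wordProd l' = C.wordProd l * C.s (C.π j) := by
  intro l
  induction l with
  | nil =>
    intro j hneg
    rw [C.wordProd_nil] at hneg
    exact absurd (C.not_isPos_isNeg_root (C.simple_mem j) (C.isPos_simple j) hneg) id
  | cons i t ih =>
    intro j hneg
    set u := C.wordProd t with hu
    have huW : u ∈ C.W := C.wordProd_mem_W t
    have hujΦ : u (C.π j) ∈ C.Φ := C.root_apply_mem huW (C.simple_mem j)
    rcases C.isPos_or_isNeg hujΦ with hupos | huneg
    · -- the fold happens here
      have hw : C.wordProd (i :: t) (C.π j) = C.s (C.π i) (u (C.π j)) := by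
        rw [C.wordProd_cons, mul_apply]
      have hβi : u (C.π j) = C.π i := by
        by_contra hne
        have := C.isPos_s_apply hujΦ hupos hne
        rw [← hw] at this
        exact C.not_isPos_isNeg_root
          (C.root_apply_mem (C.wordProd_mem_W (i :: t)) (C.simple_mem j)) this hneg
      have hconj : C.s (C.π i) = u * C.s (C.π j) * u⁻¹ := by
        rw [← hβi]
        exact C.s_conj huW (C.simple_mem j)
      refine ⟨t, by simp [List.length_cons], ?_⟩
      rw [C.wordProd_cons, ← hu, hconj]
      group
      rw [mul_assoc, C.s_mul_self (C.simple_mem j), mul_one]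
    · obtain ⟨t', ht'len, ht'⟩ := ih j huneg
      refine ⟨i :: t', by simp [List.length_cons, ht'len], ?_⟩
      rw [C.wordProd_cons, C.wordProd_cons, ht', ← hu, mul_assoc]

/-- descent: if `w πⱼ < 0` then right multiplication by `sⱼ` shortens `w`. -/
theorem length_mul_lt_of_isNeg {w : V ≃ₗ[ℝ] V} (hw : w ∈ C.W) {j : Fin C.r}
    (h : C.IsNeg (w (C.π j))) : C.length (w * C.s (C.π j)) < C.length w := by
  obtain ⟨l, hlen, hl⟩ := C.exists_min_word hw
  have := C.word_descent l j (by rw [hl]; exact h)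
  obtain ⟨l', hl'len, hl'⟩ := this
  rw [hl] at hl'
  have h2 := C.length_le hl'
  omega

/-- ascent: if `w πⱼ > 0` then right multiplication by `sⱼ` lengthens `w`. -/
theorem length_lt_mul_of_isPos {w : V ≃ₗ[ℝ] V} (hw : w ∈ C.W) {j : Fin C.r}
    (h : C.IsPos (w (C.π j))) : C.length w < C.length (w * C.s (C.π j)) := by
  have hsW : C.s (C.π j) ∈ C.W := C.s_mem_W (C.simple_mem j)
  have hws : w * C.s (C.π j) ∈ C.W := mul_mem hw hsW
  have hneg : C.IsNeg ((w * C.s (C.π j)) (C.π j)) := by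
    have : (w * C.s (C.π j)) (C.π j) = w (C.s (C.π j) (C.π j)) := rfl
    rw [this, C.s_apply_self (C.simple_mem j), map_neg]
    unfold IsNeg; rwa [neg_neg]
  have := C.length_mul_lt_of_isNeg hws hneg
  rwa [mul_assoc, C.s_mul_self (C.simple_mem j), mul_one] at this

end RootSystemData
namespace RootSystemData

variable {V : Type} [NormedAddCommGroup V] [InnerProductSpace ℝ V] [FiniteDimensional ℝ V]
variable (C : RootSystemData V)

theorem s_apply_s_apply {α : V} (hα : α ∈ C.Φ) (v : V) : C.s α (C.s α v) = v := by
  rw [← mul_apply, C.s_mul_self hα]; rfl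

/-- the inversion set of `w`: positive roots sent to negative roots -/
def invSet (w : V ≃ₗ[ℝ] V) : Finset V :=
  C.Φ.filter (fun β => C.IsPos β ∧ C.IsNeg (w β))

theorem mem_invSet {w : V ≃ₗ[ℝ] V} {β : V} :
    β ∈ C.invSet w ↔ β ∈ C.Φ ∧ C.IsPos β ∧ C.IsNeg (w β) := by
  unfold invSet; rw [Finset.mem_filter]

theorem invSet_card_succ {w : V ≃ₗ[ℝ] V} (hw : w ∈ C.W) {i : Fin C.r}
    (h : C.IsNeg (w (C.π i))) :
    (C.invSet (w * C.s (C.π i))).card + 1 = (C.invSet w).card := by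
  set u := w * C.s (C.π i) with hu
  have huW : u ∈ C.W := mul_mem hw (C.s_mem_W (C.simple_mem i))
  have hws : ∀ v, u v = w (C.s (C.π i) v) := fun v => rfl
  have hkey : C.invSet w = insert (C.π i) (Finset.image (fun β => C.s (C.π i) β) (C.invSet u)) := by
    apply Finset.ext
    intro β
    rw [Finset.mem_insert, Finset.mem_image]
    constructor
    · intro hβ
      rw [C.mem_invSet] at hβ
      obtain ⟨hβΦ, hβpos, hβneg⟩ := hβ
      by_cases hβi : β = C.π i
      · exact Or.inl hβi
      · right
        refine ⟨C.s (C.π i) β, ?_, ?_⟩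
        · rw [C.mem_invSet]
          refine ⟨C.refl_stable _ (C.simple_mem i) _ hβΦ, C.isPos_s_apply hβΦ hβpos hβi, ?_⟩
          rw [hws, C.s_apply_s_apply (C.simple_mem i)]
          exact hβneg
        · rw [← mul_apply, C.s_mul_self (C.simple_mem i)]; rfl
    · intro hβ
      rcases hβ with rfl | ⟨γ, hγ, rfl⟩
      · exact C.mem_invSet.2 ⟨C.simple_mem i, C.isPos_simple i, h⟩
      · rw [C.mem_invSet] at hγ
        obtain ⟨hγΦ, hγpos, hγneg⟩ := hγ
        have hγi : γ ≠ C.π i := by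
          rintro rfl
          apply C.not_isPos_isNeg_root (C.root_apply_mem huW hγΦ) _ hγneg
          rw [hws, C.s_apply_self (C.simple_mem i), map_neg]
          unfold IsNeg at h
          exact h
        rw [C.mem_invSet]
        refine ⟨C.refl_stable _ (C.simple_mem i) _ hγΦ, C.isPos_s_apply hγΦ hγpos hγi, ?_⟩
        exact hγneg
  have hnotmem : C.π i ∉ Finset.image (fun β => C.s (C.π i) β) (C.invSet u) := by
    intro hmem
    rcases Finset.mem_image.1 hmem with ⟨γ, hγ, hγeq⟩
    rw [C.mem_invSet] at hγ
    have hγval : γ = -C.π i := by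
      rw [← C.s_apply_s_apply (C.simple_mem i) γ, hγeq, C.s_apply_self (C.simple_mem i)]
    have h21 : C.IsPos (-C.π i) := hγval ▸ hγ.2.1
    exact C.not_isPos_isNeg_root (C.simple_mem i) (C.isPos_simple i) h21
  rw [hkey, Finset.card_insert_of_notMem hnotmem,
    Finset.card_image_of_injective _ (C.s (C.π i)).injective]

theorem invSet_card_le_word (l : List (Fin C.r)) :
    (C.invSet (C.wordProd l)).card ≤ l.length := by
  induction l using List.reverseRecOn with
  | nil =>
    have : C.invSet (C.wordProd []) = ∅ := by
      apply Finset.eq_empty_of_forall_notMem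
      intro β hβ
      rw [C.mem_invSet] at hβ
      exact C.not_isPos_isNeg_root hβ.1 hβ.2.1 (by rw [C.wordProd_nil] at hβ; exact hβ.2.2)
    simp [this]
  | append_singleton t i ih =>
    set u := C.wordProd t with hu
    have huW : u ∈ C.W := C.wordProd_mem_W t
    have hform : C.wordProd (t ++ [i]) = u * C.s (C.π i) := by
      rw [C.wordProd_append, C.wordProd_singleton]
    have huiΦ : u (C.π i) ∈ C.Φ := C.root_apply_mem huW (C.simple_mem i)
    rw [hform, List.length_append, List.length_singleton]
    rcases C.isPos_or_isNeg huiΦ with hpos | hneg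
    · -- card goes up by 1
      have hneg' : C.IsNeg ((u * C.s (C.π i)) (C.π i)) := by
        have : (u * C.s (C.π i)) (C.π i) = u (C.s (C.π i) (C.π i)) := rfl
        rw [this, C.s_apply_self (C.simple_mem i), map_neg]
        unfold IsNeg; rwa [neg_neg]
      have := C.invSet_card_succ (mul_mem huW (C.s_mem_W (C.simple_mem i))) hneg'
      rw [mul_assoc, C.s_mul_self (C.simple_mem i), mul_one] at this
      omega
    · have := C.invSet_card_succ huW hneg
      omega

theorem invSet_empty_isPos {w : V ≃ₗ[ℝ] V} (hw : w ∈ C.W)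
    (h : ∀ i, C.IsPos (w (C.π i))) : C.invSet w = ∅ := by
  apply Finset.eq_empty_of_forall_notMem
  intro β hβ
  rw [C.mem_invSet] at hβ
  obtain ⟨hβΦ, hβpos, hβneg⟩ := hβ
  obtain ⟨c, hc, hcs⟩ := hβpos
  have : C.IsPos (w β) := by
    rw [hcs, map_sum]
    apply C.isPos_sum
    intro k _
    rw [map_smul]
    exact C.isPos_smul (hc k) (h k)
  exact C.not_isPos_isNeg_root (C.root_apply_mem hw hβΦ) this hβneg

theorem length_eq_zero_of_all_pos {w : V ≃ₗ[ℝ] V} (hw : w ∈ C.W)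
    (h : ∀ i, C.IsPos (w (C.π i))) : C.length w = 0 := by
  by_contra hne
  obtain ⟨l, hlen, hl⟩ := C.exists_min_word hw
  rcases List.eq_nil_or_concat l with rfl | ⟨t, i, rfl⟩
  · rw [← hlen] at hne; exact hne rfl
  · have hform : w = C.wordProd t * C.s (C.π i) := by
      rw [← hl, List.concat_eq_append, C.wordProd_append, C.wordProd_singleton]
    have h1 : C.length (w * C.s (C.π i)) ≤ t.length := by
      apply C.length_le
      rw [hform, mul_assoc, C.s_mul_self (C.simple_mem i), mul_one]
    have h2 : C.length w < C.length (w * C.s (C.π i)) := C.length_lt_mul_of_isPos hw (h i)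
    have h3 : (t.concat i).length = t.length + 1 := by simp
    omega

end RootSystemData
namespace RootSystemData

variable {V : Type} [NormedAddCommGroup V] [InnerProductSpace ℝ V] [FiniteDimensional ℝ V]
variable (C : RootSystemData V)

theorem exists_isNeg_simple {w : V ≃ₗ[ℝ] V} (hw : w ∈ C.W)
    (h : (C.invSet w).Nonempty) : ∃ i, C.IsNeg (w (C.π i)) := by
  by_contra hcon
  push_neg at hcon
  have hall : ∀ i, C.IsPos (w (C.π i)) := fun i =>
    C.isPos_of_not_isNeg (C.root_apply_mem hw (C.simple_mem i)) (hcon i)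
  have := C.invSet_empty_isPos hw hall
  rw [this] at h
  exact Finset.not_nonempty_empty h

theorem length_le_card_invSet : ∀ (N : ℕ) (w : V ≃ₗ[ℝ] V), w ∈ C.W →
    (C.invSet w).card = N → C.length w ≤ (C.invSet w).card := by
  intro N
  induction N using Nat.strong_induction_on with
  | _ N ih =>
    intro w hw hcard
    rcases Nat.eq_zero_or_pos N with rfl | hNpos
    · -- invSet empty: w has length 0
      have hempty : C.invSet w = ∅ := Finset.card_eq_zero.1 hcard
      have hall : ∀ i, C.IsPos (w (C.π i)) := by
        intro i
        apply C.isPos_of_not_isNeg (C.root_apply_mem hw (C.simple_mem i))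
        intro hneg
        have : C.π i ∈ C.invSet w := C.mem_invSet.2 ⟨C.simple_mem i, C.isPos_simple i, hneg⟩
        rw [hempty] at this
        exact absurd this (Finset.notMem_empty _)
      rw [C.length_eq_zero_of_all_pos hw hall]
      exact Nat.zero_le _
    · have hne : (C.invSet w).Nonempty := by
        rw [← Finset.card_pos, hcard]; exact hNpos
      obtain ⟨i, hi⟩ := C.exists_isNeg_simple hw hne
      set u := w * C.s (C.π i) with hu
      have huW : u ∈ C.W := mul_mem hw (C.s_mem_W (C.simple_mem i))
      have hsucc := C.invSet_card_succ hw hi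
      rw [← hu] at hsucc
      have hcardu : (C.invSet u).card = N - 1 := by omega
      have hihu := ih (N - 1) (by omega) u huW hcardu
      have hlen : C.length w ≤ C.length u + 1 := by
        have := C.length_mul_s_le huW i
        rwa [hu, mul_assoc, C.s_mul_self (C.simple_mem i), mul_one] at this
      omega

theorem length_le_card_invSet' {w : V ≃ₗ[ℝ] V} (hw : w ∈ C.W) :
    C.length w ≤ (C.invSet w).card := C.length_le_card_invSet _ w hw rfl

theorem card_invSet_le_length {w : V ≃ₗ[ℝ] V} (hw : w ∈ C.W) :
    (C.invSet w).card ≤ C.length w := by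
  obtain ⟨l, hlen, hl⟩ := C.exists_min_word hw
  have := C.invSet_card_le_word l
  rwa [hl, hlen] at this

end RootSystemData
namespace RootSystemData

variable {V : Type} [NormedAddCommGroup V] [InnerProductSpace ℝ V] [FiniteDimensional ℝ V]
variable (C : RootSystemData V)

/-- the span of the simple roots indexed by `J` -/
def spanJ (J : Set (Fin C.r)) : Submodule ℝ V := Submodule.span ℝ (C.π '' J)

theorem simple_mem_spanJ {J : Set (Fin C.r)} {i : Fin C.r} (hi : i ∈ J) :
    C.π i ∈ C.spanJ J := Submodule.subset_span ⟨i, hi, rfl⟩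

/-- positive roots outside the parabolic sub-root-system -/
def outSet (J : Set (Fin C.r)) : Finset V :=
  C.Φ.filter (fun β => C.IsPos β ∧ β ∉ C.spanJ J)

theorem mem_outSet {J : Set (Fin C.r)} {β : V} :
    β ∈ C.outSet J ↔ β ∈ C.Φ ∧ C.IsPos β ∧ β ∉ C.spanJ J := by
  unfold outSet; rw [Finset.mem_filter]

theorem parabolic_le_stab_outSet (J : Set (Fin C.r)) :
    C.parabolicSubgroup J ≤ stabFinset (C.outSet J) := by
  refine (Subgroup.closure_le _).2 ?_
  rintro g ⟨i, hiJ, rfl⟩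
  apply image_subset_mem_stabFinset
  intro β hβ
  rw [C.mem_outSet] at hβ
  obtain ⟨hβΦ, hβpos, hβJ⟩ := hβ
  have hβi : β ≠ C.π i := by
    rintro rfl
    exact hβJ (C.simple_mem_spanJ hiJ)
  rw [C.mem_outSet]
  refine ⟨C.refl_stable _ (C.simple_mem i) _ hβΦ, C.isPos_s_apply hβΦ hβpos hβi, ?_⟩
  intro hmem
  apply hβJ
  have hform : C.s (C.π i) β = β - (2 * ⟪β, C.π i⟫_ℝ / ⟪C.π i, C.π i⟫_ℝ) • C.π i :=
    C.s_apply _ (C.simple_mem i) β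
  have : β = C.s (C.π i) β + (2 * ⟪β, C.π i⟫_ℝ / ⟪C.π i, C.π i⟫_ℝ) • C.π i := by
    rw [hform]; abel
  rw [this]
  exact Submodule.add_mem _ hmem (Submodule.smul_mem _ _ (C.simple_mem_spanJ hiJ))

theorem isPos_apply_of_mem_spanJ {J : Set (Fin C.r)} {w : V ≃ₗ[ℝ] V} (hw : w ∈ C.W)
    (hJpos : ∀ i ∈ J, C.IsPos (w (C.π i))) {β : V} (hβpos : C.IsPos β)
    (hβJ : β ∈ C.spanJ J) : C.IsPos (w β) := by
  obtain ⟨c, hc, hcs⟩ := hβpos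
  -- get a representation supported on J
  haveI : Fintype ↥J := Fintype.ofFinite _
  have hβJ' : β ∈ Submodule.span ℝ (Set.range (fun k : ↥J => C.π ↑k)) := by
    have himg : C.π '' J = Set.range (fun k : ↥J => C.π ↑k) := Set.image_eq_range _ _
    unfold spanJ at hβJ
    rwa [himg] at hβJ
  obtain ⟨d, hd⟩ := Submodule.mem_span_range_iff_exists_fun ℝ |>.1 hβJ'
  set d' : Fin C.r → ℝ := fun m => if h : m ∈ J then d ⟨m, h⟩ else 0 with hd'
  have hsum : ∑ m, d' m • C.π m = β := by
    calc ∑ m : Fin C.r, d' m • C.π m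
        = ∑ m ∈ Finset.univ.filter (fun m => m ∈ J), d' m • C.π m := by
          symm
          apply Finset.sum_filter_of_ne
          intro m _ hne
          by_contra hmJ
          apply hne
          simp only [hd', dif_neg hmJ, zero_smul]
      _ = ∑ k : ↥J, d' ↑k • C.π ↑k := by
          apply Finset.sum_subtype
          intro m; simp
      _ = ∑ k : ↥J, d k • C.π ↑k := by
          apply Finset.sum_congr rfl
          intro k _
          simp only [hd', dif_pos k.2]
      _ = β := hd
  -- coefficients agree
  have hzero : ∀ m, c m - d' m = 0 := by
    apply (Fintype.linearIndependent_iff.1 C.simple_indep)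
    simp only [sub_smul, Finset.sum_sub_distrib]
    rw [hsum, ← hcs]
    abel
  have hcd : ∀ m, c m = d' m := fun m => by have := hzero m; linarith
  -- now push through w
  rw [hcs, map_sum]
  apply C.isPos_sum
  intro m _
  rw [map_smul]
  by_cases hmJ : m ∈ J
  · exact C.isPos_smul (hc m) (hJpos m hmJ)
  · have : c m = 0 := by rw [hcd m]; simp only [hd', dif_neg hmJ]
    rw [this, zero_smul]
    exact C.isPos_zero

theorem invSet_subset_outSet {J : Set (Fin C.r)} {w : V ≃ₗ[ℝ] V} (hw : w ∈ C.W)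
    (hJpos : ∀ i ∈ J, C.IsPos (w (C.π i))) : C.invSet w ⊆ C.outSet J := by
  intro β hβ
  rw [C.mem_invSet] at hβ
  obtain ⟨hβΦ, hβpos, hβneg⟩ := hβ
  rw [C.mem_outSet]
  refine ⟨hβΦ, hβpos, ?_⟩
  intro hmem
  exact C.not_isPos_isNeg_root (C.root_apply_mem hw hβΦ)
    (C.isPos_apply_of_mem_spanJ hw hJpos hβpos hmem) hβneg

theorem card_invSet_le_parabolic {J : Set (Fin C.r)} {w : V ≃ₗ[ℝ] V} (hw : w ∈ C.W)
    (hJpos : ∀ i ∈ J, C.IsPos (w (C.π i))) {z : V ≃ₗ[ℝ] V}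
    (hz : z ∈ C.parabolicSubgroup J) :
    (C.invSet w).card ≤ (C.invSet (w * z)).card := by
  have hzout : z⁻¹ ∈ stabFinset (C.outSet J) :=
    C.parabolic_le_stab_outSet J (inv_mem hz)
  apply Finset.card_le_card_of_injOn (fun β => z⁻¹ β)
  · intro β hβ
    have hout : β ∈ C.outSet J := C.invSet_subset_outSet hw hJpos hβ
    have hzβ : z⁻¹ β ∈ C.outSet J := mem_of_mem_stabFinset hzout hout
    simp only [Finset.mem_coe] at hβ ⊢
    rw [C.mem_invSet] at hβ
    rw [C.mem_outSet] at hzβ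
    rw [C.mem_invSet]
    refine ⟨hzβ.1, hzβ.2.1, ?_⟩
    have : (w * z) (z⁻¹ β) = w β := by
      rw [mul_apply, apply_inv_apply]
    rw [this]
    exact hβ.2.2
  · intro a _ b _ hab
    exact z⁻¹.injective hab

end RootSystemData
namespace RootSystemData

variable {V : Type} [NormedAddCommGroup V] [InnerProductSpace ℝ V] [FiniteDimensional ℝ V]
variable (C : RootSystemData V)

theorem inner_omega_simple (i k : Fin C.r) :
    ⟪C.ω i, C.π k⟫_ℝ = (if i = k then 1 else 0) * (⟪C.π k, C.π k⟫_ℝ / 2) := by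
  have h := C.fund i k
  have hden := ne_of_gt (C.inner_root_pos (C.simple_mem k))
  field_simp at h ⊢
  linarith [h]

theorem isPos_of_steinberg_pairing {w : V ≃ₗ[ℝ] V} (hw : w ∈ C.W) {j : Fin C.r}
    (h : 0 ≤ pairing (C.steinberg w) (C.π j)) : C.IsPos (w (C.π j)) := by
  set S := Finset.univ.filter (fun i => C.IsNeg (w⁻¹ (C.π i))) with hS
  set x := ∑ i ∈ S, C.ω i with hx
  have hst : C.steinberg w = w⁻¹ x := rfl
  have hinner : ⟪w⁻¹ x, C.π j⟫_ℝ = ⟪x, w (C.π j)⟫_ℝ := C.inner_invariant' hw x (C.π j)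
  have hxk : ∀ k, ⟪x, C.π k⟫_ℝ = if k ∈ S then ⟪C.π k, C.π k⟫_ℝ / 2 else 0 := by
    intro k
    rw [hx, sum_inner]
    rw [Finset.sum_congr rfl (fun i _ => C.inner_omega_simple i k)]
    rw [show (∑ i ∈ S, (if i = k then (1:ℝ) else 0) * (⟪C.π k, C.π k⟫_ℝ / 2))
        = ∑ i ∈ S, (if i = k then ⟪C.π k, C.π k⟫_ℝ / 2 else 0) by
      apply Finset.sum_congr rfl; intro i _; split <;> ring]
    rw [Finset.sum_ite_eq' S k (fun _ => ⟪C.π k, C.π k⟫_ℝ / 2)]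
  have hxk_nonneg : ∀ k, 0 ≤ ⟪x, C.π k⟫_ℝ := by
    intro k
    rw [hxk k]
    split
    · exact le_of_lt (half_pos (C.inner_root_pos (C.simple_mem k)))
    · exact le_refl _
  by_contra hcon
  have hwjΦ : w (C.π j) ∈ C.Φ := C.root_apply_mem hw (C.simple_mem j)
  have hneg : C.IsNeg (w (C.π j)) := C.isNeg_of_not_isPos hwjΦ hcon
  obtain ⟨c, hc, hcs⟩ := hneg
  -- there is a coefficient supported in S
  have hex : ∃ k, 0 < c k ∧ k ∈ S := by
    by_contra hcon2
    push_neg at hcon2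
    have hki : ∀ k, c k ≠ 0 → C.IsPos (w⁻¹ (C.π k)) := by
      intro k hk
      have hkpos : 0 < c k := lt_of_le_of_ne (hc k) (Ne.symm hk)
      have hknotS := hcon2 k hkpos
      rw [hS] at hknotS
      simp only [Finset.mem_filter, Finset.mem_univ, true_and] at hknotS
      exact C.isPos_of_not_isNeg (C.root_apply_mem (inv_mem hw) (C.simple_mem k)) hknotS
    have hπj : -C.π j = ∑ k, c k • w⁻¹ (C.π k) := by
      have := congrArg (fun v => w⁻¹ v) hcs
      simp only [map_neg, map_sum, map_smul] at this
      rw [inv_apply_apply] at this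
      exact this
    have : C.IsPos (-C.π j) := by
      rw [hπj]
      apply C.isPos_sum
      intro k _
      by_cases hk : c k = 0
      · rw [hk, zero_smul]; exact C.isPos_zero
      · exact C.isPos_smul (hc k) (hki k hk)
    exact C.not_isPos_isNeg_root (C.simple_mem j) (C.isPos_simple j) this
  obtain ⟨k0, hk0pos, hk0S⟩ := hex
  -- the inner product is strictly negative
  have hsumpos : 0 < ∑ k, c k * ⟪x, C.π k⟫_ℝ := by
    apply Finset.sum_pos'
    · intro k _
      exact mul_nonneg (hc k) (hxk_nonneg k)
    · refine ⟨k0, Finset.mem_univ k0, ?_⟩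
      rw [hxk k0, if_pos hk0S]
      exact mul_pos hk0pos (half_pos (C.inner_root_pos (C.simple_mem k0)))
  have hwj : w (C.π j) = -∑ k, c k • C.π k := by
    rw [← hcs, neg_neg]
  have hval : ⟪x, w (C.π j)⟫_ℝ = -∑ k, c k * ⟪x, C.π k⟫_ℝ := by
    rw [hwj, inner_neg_right, inner_sum]
    congr 1
    apply Finset.sum_congr rfl
    intro k _
    rw [real_inner_smul_right]
  have hlt : ⟪x, w (C.π j)⟫_ℝ < 0 := by rw [hval]; linarith
  -- contradiction with the pairing hypothesis
  rw [hst] at h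
  unfold pairing at h
  rw [hinner] at h
  have hden := C.inner_root_pos (C.simple_mem j)
  have : 2 * ⟪x, w (C.π j)⟫_ℝ / ⟪C.π j, C.π j⟫_ℝ < 0 :=
    div_neg_of_neg_of_pos (by linarith) hden
  linarith

end RootSystemData
/-- If `w ∈ W` and `(e_w, α∨) ≥ 0` for every `α` in a subset `Π'` of the
simple roots, then `w` is the minimal-length representative of its coset `w W_{Π'}`, i.e.
`ℓ(w s_α) > ℓ(w)` for every `α ∈ Π'`. -/
theorem statement_12
    {V : Type} [NormedAddCommGroup V] [InnerProductSpace ℝ V] [FiniteDimensional ℝ V]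
    (C : RootSystemData V)
    (w : V ≃ₗ[ℝ] V) (hw : w ∈ C.W) (J : Set (Fin C.r))
    (h : ∀ i ∈ J, 0 ≤ pairing (C.steinberg w) (C.π i)) :
    (∀ i ∈ J, C.length w < C.length (w * C.s (C.π i))) ∧
    (∀ z ∈ C.parabolicSubgroup J, C.length w ≤ C.length (w * z)) := by
  have hJpos : ∀ i ∈ J, C.IsPos (w (C.π i)) := fun i hi =>
    C.isPos_of_steinberg_pairing hw (h i hi)
  constructor
  · intro i hi
    exact C.length_lt_mul_of_isPos hw (hJpos i hi)
  · intro z hz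
    have hzW : z ∈ C.W := C.parabolic_le J hz
    have hwz : w * z ∈ C.W := mul_mem hw hzW
    calc C.length w ≤ (C.invSet w).card := C.length_le_card_invSet' hw
      _ ≤ (C.invSet (w * z)).card := C.card_invSet_le_parabolic hw hJpos hz
      _ ≤ C.length (w * z) := C.card_invSet_le_length hwz
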